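/- Let 𝒞 be a code in H(m,2) with minimum distance at least 5, and suppose there exist: an F_2-linear subcode C ⊆ 𝒞 with minimum distance δ ≥ 5; a subgroup X_0 of the stabiliser of the zero vector in Aut(C) such that, setting X = T_C ⋊ X_0 = {v ↦ v^σ + c : (v ↦ v^σ) ∈ X_0, c ∈ C}, one has X ≤ Aut(𝒞) and C is (X,2)-neighbour-transitive; and a set S of additive cosets of C in V = F_2^m such that 𝒞 is the union of the cosets in S and Aut(𝒞) permutes the cosets in S transitively. Then 𝒞 is 2-neighbour-transitive, i.e., (Aut(𝒞),2)-neighbour-transitive. -/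

import Mathlib

open Equiv

namespace Paper

/-- A Hamming-graph automorphism of `Fin m → Q` given by entrywise permutations `h`
and a permutation `σ` of the entries. -/
def IsQAutPair {m : ℕ} {Q : Type*} (g : Perm (Fin m → Q)) (h : Fin m → Perm Q)
    (σ : Perm (Fin m)) : Prop :=
  ∀ α i, g α i = h i (α (σ.symm i))

/-- `g` is an automorphism of the Hamming graph `H(m,q)`. -/
def IsQAut {m : ℕ} {Q : Type*} (g : Perm (Fin m → Q)) : Prop :=
  ∃ h σ, IsQAutPair g h σ

/-- The permutation group `X_i^{Q_i}` induced on the alphabet in entry `i`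
by the stabiliser in `X` of the entry `i`. -/
def indQ {m : ℕ} {Q : Type*} (X : Set (Perm (Fin m → Q))) (i : Fin m) : Set (Perm Q) :=
  {π | ∃ g ∈ X, ∃ h σ, IsQAutPair g h σ ∧ σ i = i ∧ h i = π}

/-- `C_s`, the set of vertices at Hamming distance exactly `s` from the code `C`. -/
def distSet {m : ℕ} {Q : Type*} [DecidableEq Q] (C : Set (Fin m → Q)) (s : ℕ) :
    Set (Fin m → Q) :=
  {v | (∃ c ∈ C, hammingDist v c = s) ∧ ∀ c ∈ C, s ≤ hammingDist v c}

/-- `C` is `(X,s)`-neighbour-transitive: `X` acts transitively on each of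
`C = C_0, C_1, …, C_s`. -/
def NbrTrans {m : ℕ} {Q : Type*} [DecidableEq Q] (X : Set (Perm (Fin m → Q)))
    (C : Set (Fin m → Q)) (s : ℕ) : Prop :=
  ∀ j ≤ s, ∀ u ∈ distSet C j, ∀ v ∈ distSet C j, ∃ g ∈ X, g u = v

/-- `δ` is the minimum distance of the code `C`. -/
def IsMinDist {m : ℕ} {Q : Type*} [DecidableEq Q] (C : Set (Fin m → Q)) (δ : ℕ) : Prop :=
  (∃ u ∈ C, ∃ v ∈ C, u ≠ v ∧ hammingDist u v = δ) ∧
  ∀ u ∈ C, ∀ v ∈ C, u ≠ v → δ ≤ hammingDist u v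

/-- The vertex set `V = F_2^m` of the binary Hamming graph `H(m,2)`. -/
abbrev BV (m : ℕ) : Type := Fin m → ZMod 2

/-- `g` is an automorphism of the binary Hamming graph `H(m,2)`:
`g : v ↦ v^σ + c` for some `σ ∈ Sym(M)` and `c ∈ V`. -/
def IsB2Aut {m : ℕ} (g : Perm (BV m)) : Prop :=
  ∃ (σ : Perm (Fin m)) (c : BV m), ∀ v, g v = (fun i => v (σ.symm i)) + c

/-- The dual of a binary code under the standard inner product. -/
def dualCode {m : ℕ} (D : Set (BV m)) : Set (BV m) :=
  {w | ∀ v ∈ D, (∑ i, v i * w i) = 0}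



lemma zmod2_add_self : ∀ a : ZMod 2, a + a = 0 := by decide

lemma isB2Aut_mul {m : ℕ} {g h : Perm (BV m)} (hg : IsB2Aut g) (hh : IsB2Aut h) :
    IsB2Aut (g * h) := by
  obtain ⟨σg, cg, hg⟩ := hg
  obtain ⟨σh, ch, hh⟩ := hh
  refine ⟨σg * σh, (fun i => ch (σg.symm i)) + cg, fun v => ?_⟩
  show g (h v) = _
  rw [hh, hg]
  funext i
  show v (σh.symm (σg.symm i)) + ch (σg.symm i) + cg i
      = v ((σg * σh).symm i) + (ch (σg.symm i) + cg i)
  rw [add_assoc]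
  rfl

lemma isB2Aut_inv {m : ℕ} {g : Perm (BV m)} (hg : IsB2Aut g) : IsB2Aut g⁻¹ := by
  obtain ⟨σ, c, hg⟩ := hg
  refine ⟨σ.symm, fun i => c (σ i), fun v => ?_⟩
  have key : g ((fun i => v (σ.symm.symm i)) + fun i => c (σ i)) = v := by
    rw [hg]
    funext i
    show v (σ.symm.symm (σ.symm i)) + c (σ (σ.symm i)) + c i = v i
    simp [add_assoc, zmod2_add_self]
  calc g⁻¹ v = g⁻¹ (g _) := by rw [key]
    _ = _ := Equiv.symm_apply_apply g _

lemma hammingDist_b2aut {m : ℕ} {g : Perm (BV m)} (hg : IsB2Aut g) (u v : BV m) :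
    hammingDist (g u) (g v) = hammingDist u v := by
  obtain ⟨σ, c, hg⟩ := hg
  rw [hg u, hg v]
  show (Finset.univ.filter fun i => _ ≠ _).card = (Finset.univ.filter fun i => u i ≠ v i).card
  refine Finset.card_bij' (fun i _ => σ.symm i) (fun i _ => σ i) ?_ ?_ ?_ ?_
  · intro a ha
    simp only [Finset.mem_filter, Finset.mem_univ, true_and, Pi.add_apply] at ha ⊢
    intro h; exact ha (by rw [h])
  · intro a ha
    simp only [Finset.mem_filter, Finset.mem_univ, true_and, Pi.add_apply] at ha ⊢
    rw [Equiv.symm_apply_apply]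
    intro h; exact ha (by rw [add_left_inj] at h; exact h)
  · intro a _; exact Equiv.apply_symm_apply σ a
  · intro a _; exact Equiv.symm_apply_apply σ a

lemma distSet_b2aut {m : ℕ} {g : Perm (BV m)} (hg : IsB2Aut g) {D : Set (BV m)}
    (hD : g '' D = D) {j : ℕ} {u : BV m} (hu : u ∈ distSet D j) : g u ∈ distSet D j := by
  obtain ⟨⟨c, hc, hdist⟩, hmin⟩ := hu
  refine ⟨⟨g c, ?_, by rw [hammingDist_b2aut hg]; exact hdist⟩, ?_⟩
  · rw [← hD]; exact ⟨c, hc, rfl⟩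
  · intro c' hc'
    rw [← hD] at hc'
    obtain ⟨c0, hc0, rfl⟩ := hc'
    rw [hammingDist_b2aut hg]
    exact hmin c0 hc0


theorem stmt15 (m : ℕ) (CC : Set (BV m))
    (hCCδ : ∀ u ∈ CC, ∀ v ∈ CC, u ≠ v → 5 ≤ hammingDist u v)
    -- `C` is a linear subcode of `CC` with minimum distance `δ ≥ 5`
    (C : Submodule (ZMod 2) (BV m)) (hsub : (C : Set (BV m)) ⊆ CC)
    (δ : ℕ) (hδ : IsMinDist (C : Set (BV m)) δ) (h5 : 5 ≤ δ)
    -- `X_0` is a subgroup of the stabiliser of the zero vector in `Aut(C)`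
    (X0 : Subgroup (Perm (BV m)))
    (hX0 : ∀ g ∈ X0, IsB2Aut g ∧ g '' (C : Set (BV m)) = (C : Set (BV m)) ∧ g (0 : BV m) = 0)
    -- `X = T_C ⋊ X_0`
    (X : Set (Perm (BV m)))
    (hX : X = {g | ∃ c ∈ C, ∃ y ∈ X0, g = Equiv.addRight c * y})
    -- `X ≤ Aut(CC)` and `C` is `(X,2)`-neighbour-transitive
    (hXCC : ∀ g ∈ X, g '' CC = CC)
    (hNT : NbrTrans X (C : Set (BV m)) 2)
    -- `CC` is a union of a set `S` of cosets of `C`, permuted transitively by `Aut(CC)`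
    (S : Set (Set (BV m)))
    (hS : ∀ s ∈ S, ∃ v : BV m, s = (fun c => v + c) '' (C : Set (BV m)))
    (hUnion : CC = ⋃₀ S)
    (hTrans : ∀ s1 ∈ S, ∀ s2 ∈ S, ∃ g : Perm (BV m),
      IsB2Aut g ∧ g '' CC = CC ∧ g '' s1 = s2) :
    NbrTrans {g : Perm (BV m) | IsB2Aut g ∧ g '' CC = CC} CC 2 := by
  -- `C` itself is one of the cosets in `S`
  have h0C : (0 : BV m) ∈ (C : Set (BV m)) := C.zero_mem
  have h0CC : (0 : BV m) ∈ CC := hsub h0C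
  have h0U : (0 : BV m) ∈ ⋃₀ S := hUnion ▸ h0CC
  obtain ⟨sC, hsCS, h0s⟩ := h0U
  have hsC : sC = (C : Set (BV m)) := by
    obtain ⟨w, rfl⟩ := hS sC hsCS
    obtain ⟨c0, hc0, hwc0⟩ := h0s
    have hwC : w ∈ C := by
      have hw : w = -c0 := eq_neg_of_add_eq_zero_left hwc0
      rw [hw]; exact C.neg_mem hc0
    ext z
    constructor
    · rintro ⟨c, hc, rfl⟩; exact C.add_mem hwC hc
    · intro hz; exact ⟨z - w, C.sub_mem hz hwC, by show w + (z - w) = z; ring⟩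
  -- main argument
  intro j hj u hu v hv
  obtain ⟨⟨cu, hcuCC, hcud⟩, humin⟩ := hu
  obtain ⟨⟨cv, hcvCC, hcvd⟩, hvmin⟩ := hv
  have huD : u ∈ distSet CC j := ⟨⟨cu, hcuCC, hcud⟩, humin⟩
  have hvD : v ∈ distSet CC j := ⟨⟨cv, hcvCC, hcvd⟩, hvmin⟩
  have hcuU : cu ∈ ⋃₀ S := hUnion ▸ hcuCC
  have hcvU : cv ∈ ⋃₀ S := hUnion ▸ hcvCC
  obtain ⟨s1, hs1, hcus1⟩ := hcuU
  obtain ⟨s2, hs2, hcvs2⟩ := hcvU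
  obtain ⟨g1, hg1aut, hg1CC, hg1s⟩ := hTrans s1 hs1 sC hsCS
  obtain ⟨g2, hg2aut, hg2CC, hg2s⟩ := hTrans s2 hs2 sC hsCS
  -- `g1 u` and `g2 v` lie at distance exactly `j` from `C`
  have key : ∀ (g : Perm (BV m)) (s : Set (BV m)), IsB2Aut g → g '' CC = CC → g '' s = sC →
      ∀ w ∈ distSet CC j, ∀ cw ∈ s, hammingDist w cw = j →
      g w ∈ distSet (C : Set (BV m)) j := by
    intro g s hgaut hgCC hgs w hw cw hcw hcwd
    constructor
    · refine ⟨g cw, ?_, by rw [hammingDist_b2aut hgaut]; exact hcwd⟩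
      have : g cw ∈ g '' s := ⟨cw, hcw, rfl⟩
      rw [hgs, hsC] at this
      exact this
    · intro c hc
      have hcCC : c ∈ CC := hsub hc
      rw [← hgCC] at hcCC
      obtain ⟨c0, hc0, rfl⟩ := hcCC
      rw [hammingDist_b2aut hgaut]
      exact hw.2 c0 hc0
  have hg1u : g1 u ∈ distSet (C : Set (BV m)) j :=
    key g1 s1 hg1aut hg1CC hg1s u huD cu hcus1 hcud
  have hg2v : g2 v ∈ distSet (C : Set (BV m)) j :=
    key g2 s2 hg2aut hg2CC hg2s v hvD cv hcvs2 hcvd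
  obtain ⟨x, hxX, hxeq⟩ := hNT j hj (g1 u) hg1u (g2 v) hg2v
  have hxaut : IsB2Aut x := by
    have hxX' := hxX
    rw [hX] at hxX'
    obtain ⟨c, _, y, hy, rfl⟩ := hxX'
    exact isB2Aut_mul ⟨1, c, fun v => rfl⟩ (hX0 y hy).1
  have himg : ∀ (a b : Perm (BV m)) (t : Set (BV m)), (⇑(a * b)) '' t = ⇑a '' (⇑b '' t) := by
    intro a b t
    rw [← Set.image_comp]
    rfl
  have h2inv : (⇑g2⁻¹) '' CC = CC := by
    conv_lhs => rw [← hg2CC, ← Set.image_comp]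
    have : (⇑g2⁻¹ ∘ ⇑g2) = id := by
      funext a; exact Equiv.symm_apply_apply g2 a
    rw [this, Set.image_id]
  refine ⟨g2⁻¹ * x * g1, ⟨?_, ?_⟩, ?_⟩
  · exact isB2Aut_mul (isB2Aut_mul (isB2Aut_inv hg2aut) hxaut) hg1aut
  · rw [himg, himg, hg1CC, hXCC x hxX, h2inv]
  · show g2⁻¹ (x (g1 u)) = v
    rw [hxeq]
    exact Equiv.symm_apply_apply g2 v

end Paper
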